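/- If d divides n (with n ≥ d ≥ 1) and d ≥ m ≥ 2, then P(n, m, d) = (n/d)^m. -/

import Mathlib

/-- The Chebyshev distance between two functions on `{1,…,m}`
(represented on `Fin m`): `max_i |σ(i) − τ(i)|`. -/
def cheb {m : ℕ} (σ τ : Fin m → ℕ) : ℕ :=
  Finset.univ.sup fun i => Nat.dist (σ i) (τ i)

/-- `Pnm n m d` is the maximum cardinality of a set of injective functions
from `{1,…,m}` to `{1,…,n}` whose pairwise Chebyshev distance is at least
`d`. -/
noncomputable def Pnm (n m d : ℕ) : ℕ :=
  sSup {k | ∃ A : Finset (Fin m → ℕ),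
    (∀ σ ∈ A, Function.Injective σ ∧ ∀ i, σ i ∈ Finset.Icc 1 n) ∧
    (∀ σ ∈ A, ∀ τ ∈ A, σ ≠ τ → d ≤ cheb σ τ) ∧ A.card = k}

lemma dist_lt_of_div_eq {x y d : ℕ} (hd : 0 < d) (h : x / d = y / d) :
    Nat.dist x y < d := by
  have hx := Nat.div_add_mod' x d
  have hy := Nat.div_add_mod' y d
  rw [← h] at hy
  have h3 := Nat.mod_lt x hd
  have h4 := Nat.mod_lt y hd
  simp [Nat.dist]
  omega

/-- If `d ∣ n` (with `n ≥ d ≥ 1`) and `d ≥ m ≥ 2`, then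
`P(n, m, d) = (n/d)^m`. -/
theorem stmt18 (n m d : ℕ) (hdvd : d ∣ n) (hd : 1 ≤ d) (hdn : d ≤ n)
    (hm : 2 ≤ m) (hmd : m ≤ d) :
    Pnm n m d = (n / d) ^ m := by
  set q := n / d with hq
  have hqd : q * d = n := Nat.div_mul_cancel hdvd
  have hq1 : 1 ≤ q := by
    rw [hq]; exact Nat.one_le_div_iff (by omega) |>.2 hdn
  set S := {k | ∃ A : Finset (Fin m → ℕ),
    (∀ σ ∈ A, Function.Injective σ ∧ ∀ i, σ i ∈ Finset.Icc 1 n) ∧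
    (∀ σ ∈ A, ∀ τ ∈ A, σ ≠ τ → d ≤ cheb σ τ) ∧ A.card = k} with hS
  -- upper bound
  have hub : ∀ k ∈ S, k ≤ q ^ m := by
    rintro k ⟨A, hA1, hA2, rfl⟩
    -- map each σ ∈ A to its block pattern in (Fin m → Fin q)
    have key : ∀ σ ∈ A, ∀ i : Fin m, (σ i - 1) / d < q := by
      intro σ hσ i
      have h := (hA1 σ hσ).2 i
      rw [Finset.mem_Icc] at h
      rw [Nat.div_lt_iff_lt_mul (by omega)]
      omega
    classical
    let G : {σ // σ ∈ A} → (Fin m → Fin q) :=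
      fun σ i => ⟨(σ.1 i - 1) / d, key σ.1 σ.2 i⟩
    have hGinj : Function.Injective G := by
      rintro ⟨σ, hσ⟩ ⟨τ, hτ⟩ hG
      by_contra hne
      have hne' : σ ≠ τ := fun h => hne (by simp [h])
      have hcheb := hA2 σ hσ τ hτ hne'
      have hlt : cheb σ τ < d := by
        rw [cheb, Finset.sup_lt_iff (show (⊥ : ℕ) < d by simp; omega)]
        intro i _
        have : (σ i - 1) / d = (τ i - 1) / d := by
          have := congrFun hG i
          simpa [G, Fin.ext_iff] using this
        have h1 := (hA1 σ hσ).2 i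
        have h2 := (hA1 τ hτ).2 i
        rw [Finset.mem_Icc] at h1 h2
        have := dist_lt_of_div_eq (show 0 < d by omega) this
        have hd1 := Nat.div_add_mod (σ i - 1) d
        have hd2 := Nat.div_add_mod (τ i - 1) d
        simp [Nat.dist] at this ⊢
        omega
      omega
    calc A.card = Fintype.card {σ // σ ∈ A} := (Fintype.card_coe A).symm
      _ ≤ Fintype.card (Fin m → Fin q) := Fintype.card_le_of_injective G hGinj
      _ = q ^ m := by simp
  -- lower bound: explicit construction
  have hmem : q ^ m ∈ S := by
    classical
    let F : (Fin m → Fin q) → (Fin m → ℕ) := fun a i => (a i : ℕ) * d + (i : ℕ) + 1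
    have hFinj : Function.Injective F := by
      intro a b hab
      funext i
      have := congrFun hab i
      simp only [F] at this
      have : (a i : ℕ) * d = (b i : ℕ) * d := by omega
      exact Fin.ext (Nat.eq_of_mul_eq_mul_right (by omega) this)
    refine ⟨Finset.image F Finset.univ, ?_, ?_, ?_⟩
    · rintro σ hσ
      rw [Finset.mem_image] at hσ
      obtain ⟨a, -, rfl⟩ := hσ
      constructor
      · intro i j hij
        simp only [F] at hij
        have hi := i.isLt; have hj := j.isLt
        rcases lt_trichotomy ((a i : ℕ)) ((a j : ℕ)) with h | h | h
        · have : (a i : ℕ) * d + d ≤ (a j : ℕ) * d := by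
            calc (a i : ℕ) * d + d = ((a i : ℕ) + 1) * d := by ring
              _ ≤ (a j : ℕ) * d := Nat.mul_le_mul_right d h
          omega
        · have h' : (a i : ℕ) * d = (a j : ℕ) * d := by rw [h]
          exact Fin.ext (by omega)
        · have : (a j : ℕ) * d + d ≤ (a i : ℕ) * d := by
            calc (a j : ℕ) * d + d = ((a j : ℕ) + 1) * d := by ring
              _ ≤ (a i : ℕ) * d := Nat.mul_le_mul_right d h
          omega
      · intro i
        rw [Finset.mem_Icc]
        have h2 : (a i : ℕ) * d + d ≤ n := by
          calc (a i : ℕ) * d + d = ((a i : ℕ) + 1) * d := by ring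
            _ ≤ q * d := Nat.mul_le_mul_right d (a i).isLt
            _ = n := hqd
        have hi := i.isLt
        constructor <;> simp only [F] <;> omega
    · intro σ hσ τ hτ hne
      rw [Finset.mem_image] at hσ hτ
      obtain ⟨a, -, rfl⟩ := hσ
      obtain ⟨b, -, rfl⟩ := hτ
      have hab : a ≠ b := fun h => hne (by rw [h])
      obtain ⟨i, hi⟩ := Function.ne_iff.1 hab
      have hi' : (a i : ℕ) ≠ (b i : ℕ) := fun h => hi (Fin.ext h)
      have hdist : d ≤ Nat.dist (F a i) (F b i) := by
        simp only [F, Nat.dist]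
        rcases lt_or_gt_of_ne hi' with h | h
        · have : (a i : ℕ) * d + d ≤ (b i : ℕ) * d := by
            calc (a i : ℕ) * d + d = ((a i : ℕ) + 1) * d := by ring
              _ ≤ (b i : ℕ) * d := Nat.mul_le_mul_right d h
          omega
        · have : (b i : ℕ) * d + d ≤ (a i : ℕ) * d := by
            calc (b i : ℕ) * d + d = ((b i : ℕ) + 1) * d := by ring
              _ ≤ (a i : ℕ) * d := Nat.mul_le_mul_right d h
          omega
      calc d ≤ Nat.dist (F a i) (F b i) := hdist
        _ ≤ cheb (F a) (F b) := by rw [cheb]; exact Finset.le_sup (f := fun j => Nat.dist (F a j) (F b j)) (Finset.mem_univ i)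
    · rw [Finset.card_image_of_injective _ hFinj]
      simp
  rw [Pnm]
  exact le_antisymm (csSup_le ⟨_, hmem⟩ hub) (le_csSup ⟨q ^ m, hub⟩ hmem)
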